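/- Let p be prime, d ∈ ℤ/pℤ, L ≥ 1, and define g(x) = (1/(2L−1))·Σ_{j=−(L−1)}^{L−1} e^{2πi jdx/p}. Then for every x ∈ ℤ/pℤ, 1 − g(x) ≤ (2π²L²/3)·‖dx/p‖², and g(x) is real with g(x) ∈ [−1, 1]. -/

import Mathlib

lemma sq_sum_Icc (n : ℕ) :
    3 * ∑ j ∈ Finset.Icc (-(n : ℤ)) (n : ℤ), j ^ 2 = n * (n + 1) * (2 * n + 1) := by
  induction n with
  | zero => simp
  | succ n ih =>
    have hset : Finset.Icc (-((n+1 : ℕ) : ℤ)) ((n+1 : ℕ) : ℤ)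
        = insert (-((n:ℤ)+1)) (insert ((n:ℤ)+1) (Finset.Icc (-(n:ℤ)) (n:ℤ))) := by
      ext j
      simp only [Finset.mem_Icc, Finset.mem_insert]
      push_cast
      omega
    have h1 : ((n:ℤ)+1) ∉ Finset.Icc (-(n:ℤ)) (n:ℤ) := by
      simp [Finset.mem_Icc]
    have h2 : (-((n:ℤ)+1)) ∉ insert ((n:ℤ)+1) (Finset.Icc (-(n:ℤ)) (n:ℤ)) := by
      simp [Finset.mem_Icc]
      omega
    rw [hset, Finset.sum_insert h2, Finset.sum_insert h1]
    push_cast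
    ring_nf
    ring_nf at ih
    omega

theorem fejer_type_kernel_bound (p : ℕ) (hp : p.Prime) (d : ZMod p) (L : ℕ)
    (hL : 1 ≤ L) (g : ZMod p → ℂ)
    (hg : ∀ x : ZMod p, g x = (1 / (2 * (L : ℂ) - 1)) *
      ∑ j ∈ Finset.Icc (-(L : ℤ) + 1) ((L : ℤ) - 1),
        Complex.exp (2 * Real.pi * Complex.I * j * (((d * x).val : ℂ)) / p)) :
    ∀ x : ZMod p, (g x).im = 0 ∧ -1 ≤ (g x).re ∧ (g x).re ≤ 1 ∧
      1 - (g x).re ≤ 2 * Real.pi ^ 2 * L ^ 2 / 3 *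
        |(((d * x).val : ℝ) / p) - round (((d * x).val : ℝ) / p)| ^ 2 := by
  intro x
  set θ : ℝ := ((d * x).val : ℝ) / p with hθ
  set I' : Finset ℤ := Finset.Icc (-(L : ℤ) + 1) ((L : ℤ) - 1) with hI'
  -- rewrite each exponential
  have hterm : ∀ j : ℤ, Complex.exp (2 * Real.pi * Complex.I * j * (((d * x).val : ℂ)) / p)
      = Complex.exp (((2 * Real.pi * j * θ : ℝ) : ℂ) * Complex.I) := by
    intro j
    congr 1
    push_cast [hθ]
    ring
  have hM : (0:ℝ) < 2 * L - 1 := by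
    have : (1:ℝ) ≤ L := by exact_mod_cast hL
    linarith
  have hgx : g x = ((1 / (2 * (L:ℝ) - 1) : ℝ) : ℂ) *
      ∑ j ∈ I', Complex.exp (((2 * Real.pi * j * θ : ℝ) : ℂ) * Complex.I) := by
    rw [hg x]
    congr 1
    · push_cast
      ring
    · exact Finset.sum_congr rfl fun j _ => hterm j
  have hre : (g x).re = (1 / (2 * (L:ℝ) - 1)) * ∑ j ∈ I', Real.cos (2 * Real.pi * j * θ) := by
    rw [hgx, Complex.re_ofReal_mul, Complex.re_sum]
    congr 1
    exact Finset.sum_congr rfl fun j _ => Complex.exp_ofReal_mul_I_re _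
  have hsum : ∑ j ∈ I', Real.sin (2 * Real.pi * j * θ)
      = ∑ j ∈ I', -Real.sin (2 * Real.pi * j * θ) := by
    apply Finset.sum_nbij' (fun j => -j) (fun j => -j)
    · intro a ha; simp only [hI', Finset.mem_Icc] at *; omega
    · intro a ha; simp only [hI', Finset.mem_Icc] at *; omega
    · intro a _; ring
    · intro a _; ring
    · intro a _
      have : 2 * Real.pi * ((-a : ℤ) : ℝ) * θ = -(2 * Real.pi * (a : ℝ) * θ) := by
        push_cast; ring
      rw [this, Real.sin_neg, neg_neg]
  have hS0 : ∑ j ∈ I', Real.sin (2 * Real.pi * j * θ) = 0 := by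
    have h2 := hsum
    rw [Finset.sum_neg_distrib] at h2
    linarith
  have him : (g x).im = 0 := by
    rw [hgx, Complex.im_ofReal_mul, Complex.im_sum]
    have : ∑ j ∈ I', (Complex.exp (((2 * Real.pi * j * θ : ℝ) : ℂ) * Complex.I)).im
        = ∑ j ∈ I', Real.sin (2 * Real.pi * j * θ) :=
      Finset.sum_congr rfl fun j _ => Complex.exp_ofReal_mul_I_im _
    rw [this, hS0, mul_zero]
  have hcard : I'.card = 2 * L - 1 := by
    rw [hI', Int.card_Icc]
    omega
  have hcardR : (I'.card : ℝ) = 2 * (L:ℝ) - 1 := by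
    rw [hcard, Nat.cast_sub (by omega)]
    push_cast
    ring
  refine ⟨him, ?_, ?_, ?_⟩
  · -- -1 ≤ re
    rw [hre]
    rw [div_mul_eq_mul_div, one_mul, le_div_iff₀ hM]
    have : ∑ j ∈ I', (-1 : ℝ) ≤ ∑ j ∈ I', Real.cos (2 * Real.pi * j * θ) :=
      Finset.sum_le_sum fun j _ => Real.neg_one_le_cos _
    simp only [Finset.sum_const, nsmul_eq_mul, mul_neg, mul_one] at this
    rw [hcardR] at this
    linarith
  · rw [hre]
    rw [div_mul_eq_mul_div, one_mul, div_le_one hM]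
    have : ∑ j ∈ I', Real.cos (2 * Real.pi * j * θ) ≤ ∑ j ∈ I', (1 : ℝ) :=
      Finset.sum_le_sum fun j _ => Real.cos_le_one _
    simp only [Finset.sum_const, nsmul_eq_mul, mul_one] at this
    rw [hcardR] at this
    linarith
  · -- main bound
    set δ : ℝ := θ - round θ with hδ
    have hcos : ∀ j ∈ I', 1 - Real.cos (2 * Real.pi * j * θ)
        ≤ 2 * Real.pi ^ 2 * δ ^ 2 * (j:ℝ)^2 := by
      intro j _
      have harg : 2 * Real.pi * (j:ℝ) * θ = 2 * Real.pi * (j:ℝ) * δ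
          + ((j * round θ : ℤ) : ℝ) * (2 * Real.pi) := by
        push_cast [hδ]; ring
      rw [harg, Real.cos_add_int_mul_two_pi]
      have h1 := Real.one_sub_sq_div_two_le_cos (x := 2 * Real.pi * (j:ℝ) * δ)
      have heq : (2 * Real.pi * (j:ℝ) * δ) ^ 2 / 2 = 2 * Real.pi ^ 2 * δ ^ 2 * (j:ℝ)^2 := by
        ring
      rw [← heq]
      linarith
    have hsumsq : ∑ j ∈ I', (j:ℝ)^2 ≤ (2 * (L:ℝ) - 1) * (L:ℝ)^2 / 3 := by
      have h3 : 3 * ∑ j ∈ Finset.Icc (-((L-1 : ℕ) : ℤ)) ((L-1 : ℕ) : ℤ), (j:ℤ) ^ 2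
          = (L-1 : ℕ) * ((L-1 : ℕ) + 1) * (2 * (L-1 : ℕ) + 1) := sq_sum_Icc (L-1)
      have hsets : I' = Finset.Icc (-((L-1 : ℕ) : ℤ)) ((L-1 : ℕ) : ℤ) := by
        rw [hI']
        congr 1 <;> push_cast [hL] <;> omega
      have hcast : ∑ j ∈ I', (j:ℝ)^2 = ((∑ j ∈ I', j^2 : ℤ) : ℝ) := by push_cast; rfl
      rw [hcast, hsets]
      rw [hsets] at hcast
      have hLc : ((L-1:ℕ):ℝ) = (L:ℝ) - 1 := by
        push_cast [hL]; ring
      have h3R : 3 * ((∑ j ∈ Finset.Icc (-((L-1 : ℕ) : ℤ)) ((L-1 : ℕ) : ℤ), j ^ 2 : ℤ):ℝ)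
          = ((L:ℝ)-1) * (((L:ℝ)-1) + 1) * (2 * ((L:ℝ)-1) + 1) := by
        rw [← hLc]
        exact_mod_cast h3
      have hL1 : (1:ℝ) ≤ L := by exact_mod_cast hL
      nlinarith [h3R]
    have hfinal : (2 * (L:ℝ) - 1) - ∑ j ∈ I', Real.cos (2 * Real.pi * j * θ)
        ≤ (2 * Real.pi ^ 2 * (L:ℝ) ^ 2 / 3 * δ ^ 2) * (2 * (L:ℝ) - 1) := by
      have e1 : (2 * (L:ℝ) - 1) - ∑ j ∈ I', Real.cos (2 * Real.pi * j * θ)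
          = ∑ j ∈ I', (1 - Real.cos (2 * Real.pi * j * θ)) := by
        rw [Finset.sum_sub_distrib, Finset.sum_const, nsmul_eq_mul, mul_one, hcardR]
      have e2 : ∑ j ∈ I', (1 - Real.cos (2 * Real.pi * j * θ))
          ≤ ∑ j ∈ I', 2 * Real.pi ^ 2 * δ ^ 2 * (j:ℝ)^2 := Finset.sum_le_sum hcos
      have e3 : ∑ j ∈ I', 2 * Real.pi ^ 2 * δ ^ 2 * (j:ℝ)^2
          = (2 * Real.pi ^ 2 * δ ^ 2) * ∑ j ∈ I', (j:ℝ)^2 := by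
        rw [Finset.mul_sum]
      have e4 : (2 * Real.pi ^ 2 * δ ^ 2) * ∑ j ∈ I', (j:ℝ)^2
          ≤ (2 * Real.pi ^ 2 * δ ^ 2) * ((2 * (L:ℝ) - 1) * (L:ℝ)^2 / 3) := by
        apply mul_le_mul_of_nonneg_left hsumsq
        positivity
      have e5 : (2 * Real.pi ^ 2 * δ ^ 2) * ((2 * (L:ℝ) - 1) * (L:ℝ)^2 / 3)
          = (2 * Real.pi ^ 2 * (L:ℝ) ^ 2 / 3 * δ ^ 2) * (2 * (L:ℝ) - 1) := by
        ring
      calc (2 * (L:ℝ) - 1) - ∑ j ∈ I', Real.cos (2 * Real.pi * j * θ)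
          = ∑ j ∈ I', (1 - Real.cos (2 * Real.pi * j * θ)) := e1
        _ ≤ ∑ j ∈ I', 2 * Real.pi ^ 2 * δ ^ 2 * (j:ℝ)^2 := e2
        _ = (2 * Real.pi ^ 2 * δ ^ 2) * ∑ j ∈ I', (j:ℝ)^2 := e3
        _ ≤ (2 * Real.pi ^ 2 * δ ^ 2) * ((2 * (L:ℝ) - 1) * (L:ℝ)^2 / 3) := e4
        _ = (2 * Real.pi ^ 2 * (L:ℝ) ^ 2 / 3 * δ ^ 2) * (2 * (L:ℝ) - 1) := e5
    have h1 : 1 - 1 / (2 * (L:ℝ) - 1) * ∑ j ∈ I', Real.cos (2 * Real.pi * j * θ)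
        = ((2 * (L:ℝ) - 1) - ∑ j ∈ I', Real.cos (2 * Real.pi * j * θ)) / (2 * (L:ℝ) - 1) := by
      field_simp
      congr 1
      exact Finset.sum_congr rfl fun j _ => by ring_nf
    rw [hre, sq_abs, h1, div_le_iff₀ hM]
    exact hfinal
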